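/- Let d ∈ ℝ and define W_d(q) := q·h + (1−q)·l + d·q^{(1−k̃)/2}·(1−q)^{(1+k̃)/2} for q ∈ (0,1). Then W_d is twice differentiable on (0,1) and satisfies ρ·W_d(q) − (1/2)·((h−l)/σ̃)²·q²·(1−q)²·W_d''(q) − ρ·( q·h + (1−q)·l ) = 0 for every q ∈ (0,1). -/

import Mathlib

set_option autoImplicit false

/-- Derivative of `y ↦ y^p (1-y)^r` on `(0,1)` (real powers). -/
lemma stmt7_aux (x p r : ℝ) (hx0 : 0 < x) (hx1 : x < 1) :
    HasDerivAt (fun y : ℝ => y ^ p * (1 - y) ^ r)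
      (p * x ^ (p - 1) * (1 - x) ^ r - r * x ^ p * (1 - x) ^ (r - 1)) x := by
  have h1x : (0 : ℝ) < 1 - x := by linarith
  have h1 : HasDerivAt (fun y : ℝ => y ^ p) (p * x ^ (p - 1)) x :=
    Real.hasDerivAt_rpow_const (Or.inl hx0.ne')
  have hb : HasDerivAt (fun y : ℝ => 1 - y) (-1) x := by
    simpa using (hasDerivAt_id x).const_sub 1
  have h2 : HasDerivAt (fun y : ℝ => (1 - y) ^ r) (r * (1 - x) ^ (r - 1) * (-1)) x :=
    (Real.hasDerivAt_rpow_const (Or.inl h1x.ne')).comp x hb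
  have := h1.mul h2
  refine this.congr_deriv ?_
  ring

theorem stmt_7 (l h ρ σt d : ℝ)
    (hlh : l < h) (hρ : 0 < ρ) (hσt : 0 < σt)
    (kt : ℝ) (hkt : kt = Real.sqrt (1 + 8 * ρ * (σt / (h - l)) ^ 2))
    (W : ℝ → ℝ)
    (hW : ∀ q : ℝ, W q = q * h + (1 - q) * l
      + d * q ^ ((1 - kt) / 2) * (1 - q) ^ ((1 + kt) / 2)) :
    ∀ q ∈ Set.Ioo (0 : ℝ) 1,
      DifferentiableAt ℝ W q ∧ DifferentiableAt ℝ (deriv W) q ∧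
      ρ * W q - (1 / 2) * ((h - l) / σt) ^ 2 * q ^ 2 * (1 - q) ^ 2 * deriv (deriv W) q
        - ρ * (q * h + (1 - q) * l) = 0 := by
  set a : ℝ := (1 - kt) / 2 with ha
  set b : ℝ := (1 + kt) / 2 with hb
  have hhl : h - l ≠ 0 := sub_ne_zero.mpr hlh.ne'
  have hσ : σt ≠ 0 := hσt.ne'
  have hfe : W = fun q : ℝ => q * h + (1 - q) * l + d * (q ^ a * (1 - q) ^ b) := by
    funext q; rw [hW q]; ring
  set W1 : ℝ → ℝ := fun x =>
    h - l + d * a * (x ^ (a - 1) * (1 - x) ^ b) - d * b * (x ^ a * (1 - x) ^ (b - 1))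
    with hW1def
  set W2 : ℝ → ℝ := fun x =>
    d * a * ((a - 1) * x ^ (a - 1 - 1) * (1 - x) ^ b - b * x ^ (a - 1) * (1 - x) ^ (b - 1))
    - d * b * (a * x ^ (a - 1) * (1 - x) ^ (b - 1) - (b - 1) * x ^ a * (1 - x) ^ (b - 1 - 1))
    with hW2def
  have hD1 : ∀ x ∈ Set.Ioo (0 : ℝ) 1, HasDerivAt W (W1 x) x := by
    intro x hx
    have hbase : HasDerivAt (fun q : ℝ => q * h + (1 - q) * l) (h - l) x := by
      have := ((hasDerivAt_id x).mul_const h).add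
        (((hasDerivAt_const x (1 : ℝ)).sub (hasDerivAt_id x)).mul_const l)
      refine this.congr_deriv ?_
      ring
    have hp := (stmt7_aux x a b hx.1 hx.2).const_mul d
    have := hbase.add hp
    rw [hfe]
    refine this.congr_deriv ?_
    simp [hW1def]; ring
  have hD2 : ∀ x ∈ Set.Ioo (0 : ℝ) 1, HasDerivAt W1 (W2 x) x := by
    intro x hx
    have h1 := (stmt7_aux x (a - 1) b hx.1 hx.2).const_mul (d * a)
    have h2 := (stmt7_aux x a (b - 1) hx.1 hx.2).const_mul (d * b)
    have := ((hasDerivAt_const x (h - l)).add h1).sub h2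
    refine this.congr_deriv ?_
    simp [hW2def]
  intro q hq
  obtain ⟨hq0, hq1⟩ := hq
  have hq01 : q ∈ Set.Ioo (0 : ℝ) 1 := ⟨hq0, hq1⟩
  have hmem : ∀ᶠ x in nhds q, x ∈ Set.Ioo (0 : ℝ) 1 :=
    isOpen_Ioo.eventually_mem hq01
  have hdW : deriv W =ᶠ[nhds q] W1 := hmem.mono fun x hx => (hD1 x hx).deriv
  have hdiff1 : DifferentiableAt ℝ W q := (hD1 q hq01).differentiableAt
  have hdiff2 : DifferentiableAt ℝ (deriv W) q :=
    (hD2 q hq01).differentiableAt.congr_of_eventuallyEq hdW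
  refine ⟨hdiff1, hdiff2, ?_⟩
  have hdd : deriv (deriv W) q = W2 q := by
    rw [hdW.deriv_eq, (hD2 q hq01).deriv]
  rw [hdd, hW q, hW2def]
  beta_reduce
  have h1q : (0 : ℝ) < 1 - q := by linarith
  have hk2' : ((h - l) / σt) ^ 2 * (kt ^ 2 - 1) = 8 * ρ := by
    have h1 : kt ^ 2 = 1 + 8 * ρ * (σt / (h - l)) ^ 2 := by
      rw [hkt]; exact Real.sq_sqrt (by positivity)
    field_simp at h1 ⊢
    linear_combination h1
  have eX2 : q ^ a = q ^ (a - 1 - 1) * q ^ 2 := by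
    rw [Real.rpow_sub hq0 (a - 1) 1, Real.rpow_sub hq0 a 1, Real.rpow_one]
    field_simp
  have eX1 : q ^ (a - 1) = q ^ (a - 1 - 1) * q := by
    rw [Real.rpow_sub hq0 (a - 1) 1, Real.rpow_one]
    field_simp
  have eY2 : (1 - q) ^ b = (1 - q) ^ (b - 1 - 1) * (1 - q) ^ 2 := by
    rw [Real.rpow_sub h1q (b - 1) 1, Real.rpow_sub h1q b 1, Real.rpow_one]
    field_simp
  have eY1 : (1 - q) ^ (b - 1) = (1 - q) ^ (b - 1 - 1) * (1 - q) := by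
    rw [Real.rpow_sub h1q (b - 1) 1, Real.rpow_one]
    field_simp
  rw [eX2, eX1, eY2, eY1, ha, hb]
  linear_combination (-(d * q ^ ((1 - kt) / 2 - 1 - 1) * (1 - q) ^ ((1 + kt) / 2 - 1 - 1)
    * q ^ 2 * (1 - q) ^ 2) / 8) * hk2'
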